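/- For any finite simple graph G with m edges and arboricity α, the number of triangles in G is at most α·m. -/

import Mathlib

open Finset

/-- The arboricity of a graph: the minimum number `k` of forests into which the edge set can
be partitioned (a partition of the edges into `k` acyclic graphs). -/
noncomputable def arboricity {V : Type} (G : SimpleGraph V) : ℕ :=
  sInf {k : ℕ | ∃ c : Sym2 V → Fin k, ∀ i : Fin k,
    (SimpleGraph.fromEdgeSet {e ∈ G.edgeSet | c e = i}).IsAcyclic}

section Aux

open SimpleGraph


variable {V : Type} [DecidableEq V]
set_option linter.unusedSectionVars false

lemma sym2_exists_max (d : V → ℕ) (e : Sym2 V) : ∃ x, x ∈ e ∧ ∀ y ∈ e, d y ≤ d x := by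
  induction e using Sym2.ind with
  | _ u v =>
    rcases le_total (d u) (d v) with h | h
    · exact ⟨v, by simp, by intro y hy; rcases Sym2.mem_iff.mp hy with rfl | rfl <;> omega⟩
    · exact ⟨u, by simp, by intro y hy; rcases Sym2.mem_iff.mp hy with rfl | rfl <;> omega⟩

noncomputable def pick (d : V → ℕ) (e : Sym2 V) : V := (sym2_exists_max d e).choose

lemma pick_mem (d : V → ℕ) (e : Sym2 V) : pick d e ∈ e := (sym2_exists_max d e).choose_spec.1

lemma pick_max (d : V → ℕ) (e : Sym2 V) {y : V} (hy : y ∈ e) : d y ≤ d (pick d e) :=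
  (sym2_exists_max d e).choose_spec.2 y hy

-- u not on a shortest walk from a to r
lemma not_mem_shortest {G' : SimpleGraph V} {u a r : V} (hne : u ≠ a)
    (hle : G'.dist a r ≤ G'.dist u r) (q : G'.Walk a r) (hq : q.length = G'.dist a r) :
    u ∉ q.support := by
  intro h
  have hds : G'.dist u r ≤ (q.dropUntil u h).length := G'.dist_le _
  have hsum : (q.takeUntil u h).length + (q.dropUntil u h).length = q.length := by
    have := congrArg Walk.length (q.take_spec h)
    rwa [Walk.length_append] at this
  have htake : (q.takeUntil u h).length = 0 := by omega
  exact hne ((q.takeUntil u h).eq_of_length_eq_zero htake).symm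

lemma dist_ne_of_adj {G' : SimpleGraph V} (hG' : G'.IsAcyclic) {u a r : V}
    (hua : G'.Adj u a) (hr : G'.Reachable u r) : G'.dist a r ≠ G'.dist u r := by
  intro heq
  have hra : G'.Reachable a r := (hua.symm.reachable).trans hr
  obtain ⟨qa, hqap, hqa⟩ := hra.exists_path_of_dist
  obtain ⟨p1, hp1p, hp1⟩ := hr.exists_path_of_dist
  have hnotin : u ∉ qa.support := not_mem_shortest hua.ne (le_of_eq heq) qa hqa
  have : (⟨p1, hp1p⟩ : G'.Path u r) = ⟨Walk.cons hua qa, hqap.cons hnotin⟩ := hG'.path_unique _ _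
  have hlen : p1.length = qa.length + 1 := by
    have := congrArg (fun p : G'.Path u r => p.1.length) this
    simpa using this
  omega

lemma no_two_down {G' : SimpleGraph V} (hG' : G'.IsAcyclic) {u a b r : V}
    (hua : G'.Adj u a) (hub : G'.Adj u b) (hab : a ≠ b) (hr : G'.Reachable u r)
    (hda : G'.dist a r ≤ G'.dist u r) (hdb : G'.dist b r ≤ G'.dist u r) : False := by
  obtain ⟨qa, hqap, hqa⟩ := ((hua.symm.reachable).trans hr).exists_path_of_dist
  obtain ⟨qb, hqbp, hqb⟩ := ((hub.symm.reachable).trans hr).exists_path_of_dist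
  have hna : u ∉ qa.support := not_mem_shortest hua.ne hda qa hqa
  have hnb : u ∉ qb.support := not_mem_shortest hub.ne hdb qb hqb
  have heq : (⟨Walk.cons hua qa, hqap.cons hna⟩ : G'.Path u r)
      = ⟨Walk.cons hub qb, hqbp.cons hnb⟩ := hG'.path_unique _ _
  have h2 : (Walk.cons hua qa).getVert 1 = (Walk.cons hub qb).getVert 1 :=
    congrArg (fun w : G'.Walk u r => w.getVert 1) (Subtype.ext_iff.mp heq)
  rw [Walk.getVert_cons_succ (n := 0), Walk.getVert_cons_succ (n := 0), Walk.getVert_zero,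
    Walk.getVert_zero] at h2
  exact hab h2

/-- distance to the root of one's component -/
noncomputable def droot (G' : SimpleGraph V) (v : V) : ℕ :=
  G'.dist v (G'.connectedComponentMk v).out

lemma reachable_out (G' : SimpleGraph V) (v : V) :
    G'.Reachable v (G'.connectedComponentMk v).out := by
  apply (SimpleGraph.ConnectedComponent.exact _).symm
  exact (G'.connectedComponentMk v).out_eq

lemma droot_adj (G' : SimpleGraph V) {v w : V} (h : G'.Adj v w) :
    droot G' w = G'.dist w (G'.connectedComponentMk v).out := by
  unfold droot
  rw [SimpleGraph.ConnectedComponent.connectedComponentMk_eq_of_adj h.symm]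

lemma pick_injOn (G' : SimpleGraph V) (hG' : G'.IsAcyclic) :
    Set.InjOn (pick (droot G')) G'.edgeSet := by
  intro e1 h1 e2 h2 hpe
  by_contra hne
  set u := pick (droot G') e2 with hu
  have hu1 : u ∈ e1 := hpe ▸ pick_mem _ e1
  have hu2 : u ∈ e2 := pick_mem _ e2
  set a := Sym2.Mem.other hu1 with ha
  set b := Sym2.Mem.other hu2 with hb
  have hea : s(u, a) = e1 := Sym2.other_spec hu1
  have heb : s(u, b) = e2 := Sym2.other_spec hu2
  have hadja : G'.Adj u a := by rw [← SimpleGraph.mem_edgeSet, hea]; exact h1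
  have hadjb : G'.Adj u b := by rw [← SimpleGraph.mem_edgeSet, heb]; exact h2
  have hab : a ≠ b := fun h => hne (by rw [← hea, ← heb, h])
  have hda : droot G' a ≤ droot G' u := by
    rw [← hpe]; exact pick_max _ e1 (by rw [← hea]; simp)
  have hdb : droot G' b ≤ droot G' u := pick_max _ e2 (by rw [← heb]; simp)
  rw [droot_adj G' hadja] at hda
  rw [droot_adj G' hadjb] at hdb
  exact no_two_down hG' hadja hadjb hab (reachable_out G' u) hda hdb

lemma acyclic_of_subsingleton {s : Set (Sym2 V)} (hs : s.Subsingleton) :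
    (SimpleGraph.fromEdgeSet s).IsAcyclic := by
  intro v p hp
  have h3 := hp.three_le_length
  have hnd : p.edges.Nodup := hp.edges_nodup
  have hlen : p.edges.length = p.length := p.length_edges
  have hsub : ∀ e ∈ p.edges, e ∈ s := by
    intro e he
    have := p.edges_subset_edgeSet he
    rw [SimpleGraph.edgeSet_fromEdgeSet] at this
    exact this.1
  rcases hE : p.edges with _ | ⟨e1, l⟩
  · rw [hE] at hlen; simp at hlen; omega
  rcases l with _ | ⟨e2, l'⟩
  · rw [hE] at hlen; simp at hlen; omega
  have h1 : e1 ∈ s := hsub e1 (by rw [hE]; simp)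
  have h2 : e2 ∈ s := hsub e2 (by rw [hE]; simp)
  rw [hE] at hnd
  rw [List.nodup_cons] at hnd
  exact hnd.1 (by rw [hs h1 h2]; simp)

lemma arb_set_nonempty [Fintype V] (G : SimpleGraph V) :
    {k : ℕ | ∃ c : Sym2 V → Fin k, ∀ i : Fin k,
      (SimpleGraph.fromEdgeSet {e ∈ G.edgeSet | c e = i}).IsAcyclic}.Nonempty := by
  classical
  refine ⟨Fintype.card (Sym2 V) + 1, fun e => (Fintype.equivFin (Sym2 V) e).castSucc, fun i => ?_⟩
  apply acyclic_of_subsingleton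
  intro x hx y hy
  have : (Fintype.equivFin (Sym2 V) x).castSucc = (Fintype.equivFin (Sym2 V) y).castSucc :=
    hx.2.trans hy.2.symm
  have := Fin.castSucc_injective _ this
  exact (Fintype.equivFin (Sym2 V)).injective this

variable [Fintype V] (G : SimpleGraph V) [DecidableRel G.Adj]

lemma tri_edges {t : Finset V} (ht : t ∈ G.cliqueFinset 3) :
    (G.edgeFinset.filter (fun e => ∀ x ∈ e, x ∈ t)).card = 3 := by
  classical
  rw [SimpleGraph.mem_cliqueFinset_iff] at ht
  obtain ⟨x, y, z, hxy, hxz, hyz, rfl⟩ := Finset.card_eq_three.mp ht.card_eq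
  have hc := ht.isClique
  have axy : G.Adj x y := hc (by simp) (by simp) hxy
  have axz : G.Adj x z := hc (by simp) (by simp) hxz
  have ayz : G.Adj y z := hc (by simp) (by simp) hyz
  have heq : (G.edgeFinset.filter (fun e => ∀ w ∈ e, w ∈ ({x, y, z} : Finset V)))
      = {s(x,y), s(x,z), s(y,z)} := by
    ext e
    induction e using Sym2.ind with
    | _ a b =>
      simp only [Finset.mem_filter, SimpleGraph.mem_edgeFinset, SimpleGraph.mem_edgeSet,
        Sym2.mem_iff, Finset.mem_insert, Finset.mem_singleton, Sym2.eq_iff]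
      constructor
      · rintro ⟨hab, hmem⟩
        have ha := hmem a (Or.inl rfl)
        have hb := hmem b (Or.inr rfl)
        have hne := hab.ne
        rcases ha with rfl|rfl|rfl <;> rcases hb with rfl|rfl|rfl <;> tauto
      · rintro ((⟨rfl, rfl⟩|⟨rfl, rfl⟩)|(⟨rfl, rfl⟩|⟨rfl, rfl⟩)|(⟨rfl, rfl⟩|⟨rfl, rfl⟩)) <;>
          refine ⟨by first | assumption | (apply SimpleGraph.Adj.symm; assumption), ?_⟩ <;>
          · rintro w (rfl|rfl) <;> simp
  rw [heq]
  rw [Finset.card_insert_of_notMem (by simp [Sym2.eq_iff]; tauto),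
    Finset.card_insert_of_notMem (by simp [Sym2.eq_iff]; tauto), Finset.card_singleton]

lemma three_mul_tri :
    3 * (G.cliqueFinset 3).card
      = ∑ e ∈ G.edgeFinset, ((G.cliqueFinset 3).filter (fun t => ∀ x ∈ e, x ∈ t)).card := by
  classical
  have : ∑ e ∈ G.edgeFinset, ((G.cliqueFinset 3).filter (fun t => ∀ x ∈ e, x ∈ t)).card
      = ∑ t ∈ G.cliqueFinset 3, (G.edgeFinset.filter (fun e => ∀ x ∈ e, x ∈ t)).card := by
    simp only [Finset.card_filter]
    rw [Finset.sum_comm]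
  rw [this, Finset.sum_congr rfl (fun t ht => tri_edges G ht)]
  simp [mul_comm]

lemma tri_count_le_degree {e : Sym2 V} (he : e ∈ G.edgeFinset) {w : V} (hw : w ∈ e) :
    ((G.cliqueFinset 3).filter (fun t => ∀ x ∈ e, x ∈ t)).card ≤ G.degree w := by
  classical
  set a := Sym2.Mem.other hw with hadef
  have hea : s(w, a) = e := Sym2.other_spec hw
  have hadj : G.Adj w a := by
    rw [← SimpleGraph.mem_edgeSet, hea]; exact SimpleGraph.mem_edgeFinset.mp he
  have hwa : w ≠ a := hadj.ne
  rw [← SimpleGraph.card_neighborFinset_eq_degree]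
  set f : Finset V → V := fun t => if h : ∃ x, (t.erase w).erase a = {x} then h.choose else w
    with hf
  have hspec : ∀ t ∈ (G.cliqueFinset 3).filter (fun t => ∀ x ∈ e, x ∈ t),
      (t.erase w).erase a = {f t} ∧ t = insert w (insert a ((t.erase w).erase a)) := by
    intro t ht
    simp only [Finset.mem_filter] at ht
    have hmemw : w ∈ t := ht.2 w hw
    have hmema : a ∈ t := ht.2 a (by rw [← hea]; simp)
    have haw : a ∈ t.erase w := Finset.mem_erase.mpr ⟨fun h => hwa h.symm, hmema⟩
    have hcard : ((t.erase w).erase a).card = 1 := by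
      rw [Finset.card_erase_of_mem haw, Finset.card_erase_of_mem hmemw,
        (SimpleGraph.mem_cliqueFinset_iff.mp ht.1).card_eq]
    have hex : ∃ x, (t.erase w).erase a = {x} := Finset.card_eq_one.mp hcard
    constructor
    · rw [hf]; simp only [dif_pos hex]; exact hex.choose_spec
    · rw [Finset.insert_erase haw, Finset.insert_erase hmemw]
  apply Finset.card_le_card_of_injOn f
  · intro t ht
    obtain ⟨h1, h2⟩ := hspec t ht
    simp only [Finset.mem_coe, Finset.mem_filter] at ht
    have hft : f t ∈ (t.erase w).erase a := by rw [h1]; simp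
    have hftw : f t ≠ w := (Finset.mem_erase.mp (Finset.mem_of_mem_erase hft)).1
    have hftt : f t ∈ t := Finset.mem_of_mem_erase (Finset.mem_of_mem_erase hft)
    have hmemw : w ∈ t := ht.2 w hw
    rw [Finset.mem_coe, SimpleGraph.mem_neighborFinset]
    exact (SimpleGraph.mem_cliqueFinset_iff.mp ht.1).isClique hmemw hftt (fun h => hftw h.symm)
  · intro t1 h1 t2 h2 hf12
    obtain ⟨h11, h12⟩ := hspec t1 h1
    obtain ⟨h21, h22⟩ := hspec t2 h2
    rw [h12, h22, h11, h21, hf12]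


lemma main_aux (α : ℕ) (c : Sym2 V → Fin α)
    (hc : ∀ i : Fin α,
      (SimpleGraph.fromEdgeSet {e ∈ G.edgeSet | c e = i}).IsAcyclic) :
    (G.cliqueFinset 3).card ≤ α * G.edgeFinset.card := by
  classical
  set Gi : Fin α → SimpleGraph V :=
    fun i => SimpleGraph.fromEdgeSet {e ∈ G.edgeSet | c e = i} with hGi
  set vm : Sym2 V → V := fun e => pick (droot (Gi (c e))) e with hvm
  have hedge : ∀ {e : Sym2 V}, e ∈ G.edgeFinset → e ∈ (Gi (c e)).edgeSet := by
    intro e he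
    rw [hGi, SimpleGraph.edgeSet_fromEdgeSet]
    have heS := SimpleGraph.mem_edgeFinset.mp he
    exact ⟨⟨heS, rfl⟩, G.not_isDiag_of_mem_edgeSet heS⟩
  -- fiber bound
  have hfiber : ∀ w : V, (G.edgeFinset.filter (fun e => vm e = w)).card ≤ α := by
    intro w
    have hb : (G.edgeFinset.filter (fun e => vm e = w)).card
        ≤ (Finset.univ : Finset (Fin α)).card := by
      apply Finset.card_le_card_of_injOn c (fun e _ => Finset.mem_univ _)
      intro e1 h1 e2 h2 hce
      replace h1 := Finset.mem_filter.mp h1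
      replace h2 := Finset.mem_filter.mp h2
      have he1 : e1 ∈ (Gi (c e1)).edgeSet := hedge h1.1
      have he2 : e2 ∈ (Gi (c e1)).edgeSet := by rw [hce]; exact hedge h2.1
      apply pick_injOn (Gi (c e1)) (by rw [hGi]; exact hc (c e1) : (Gi (c e1)).IsAcyclic) he1 he2
      show pick (droot (Gi (c e1))) e1 = pick (droot (Gi (c e1))) e2
      have : pick (droot (Gi (c e2))) e2 = pick (droot (Gi (c e1))) e2 := by rw [hce]
      rw [← this]
      exact h1.2.trans h2.2.symm
    rwa [Finset.card_univ, Fintype.card_fin] at hb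
  have hvm_mem : ∀ e : Sym2 V, vm e ∈ e := fun e => pick_mem _ e
  have step1 := three_mul_tri G
  have step2 : ∑ e ∈ G.edgeFinset, ((G.cliqueFinset 3).filter (fun t => ∀ x ∈ e, x ∈ t)).card
      ≤ ∑ e ∈ G.edgeFinset, G.degree (vm e) :=
    Finset.sum_le_sum (fun e he => tri_count_le_degree G he (hvm_mem e))
  have step3 : ∑ e ∈ G.edgeFinset, G.degree (vm e) ≤ α * (2 * G.edgeFinset.card) := by
    rw [← SimpleGraph.sum_degrees_eq_twice_card_edges]
    rw [← Finset.sum_fiberwise G.edgeFinset vm (fun e => G.degree (vm e))]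
    rw [Finset.mul_sum]
    apply Finset.sum_le_sum
    intro w _
    have : ∑ e ∈ G.edgeFinset.filter (fun e => vm e = w), G.degree (vm e)
        = (G.edgeFinset.filter (fun e => vm e = w)).card * G.degree w := by
      rw [Finset.card_eq_sum_ones, Finset.sum_mul, one_mul]
      apply Finset.sum_congr rfl
      intro e he
      rw [(Finset.mem_filter.mp he).2]
    rw [this]
    exact Nat.mul_le_mul_right _ (hfiber w)
  have hfin : 3 * (G.cliqueFinset 3).card ≤ 3 * (α * G.edgeFinset.card) := by
    calc 3 * (G.cliqueFinset 3).card ≤ α * (2 * G.edgeFinset.card) := by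
          rw [step1]; exact le_trans step2 step3
      _ ≤ 3 * (α * G.edgeFinset.card) := by ring_nf; omega
  exact Nat.le_of_mul_le_mul_left hfin (by norm_num)

end Aux

/-- The number of triangles of a finite simple graph with `m` edges and arboricity `α` is at
most `α * m`. -/
theorem stmt_14 {V : Type} [Fintype V] [DecidableEq V]
    (G : SimpleGraph V) [DecidableRel G.Adj] :
    (G.cliqueFinset 3).card ≤ arboricity G * G.edgeFinset.card := by
  obtain ⟨c, hc⟩ : arboricity G ∈ {k : ℕ | ∃ c : Sym2 V → Fin k, ∀ i : Fin k,
      (SimpleGraph.fromEdgeSet {e ∈ G.edgeSet | c e = i}).IsAcyclic} :=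
    Nat.sInf_mem (arb_set_nonempty G)
  exact main_aux G (arboricity G) c hc
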